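/- Fix a real number p with 0 < p < 1 and ε with 0 < ε < 1/2, set q = 1/p, and for each n let r = r(n) = ⌊z(n,p) − ε⌋. Then there exists a constant C > 0 (independent of n) such that for all sufficiently large n, T_{(r−1,0,0,0)} ≤ C·(log_q n)²/n. In particular r⁴·T_{(r−1,0,0,0)} → 0 as n → ∞. -/

import Mathlib

open Finset Filter

noncomputable section

/-- `z(n,p) = 2 log_q n − 2 log_q log_q n + 2 log_q (e/2) + 1`, where `q = 1/p`. -/
def zf (p : ℝ) (n : ℕ) : ℝ :=
  2 * Real.logb p⁻¹ n - 2 * Real.logb p⁻¹ (Real.logb p⁻¹ n)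
    + 2 * Real.logb p⁻¹ (Real.exp 1 / 2) + 1

/-- The set `D` of vectors `(a,b,c,d)` of nonnegative integers with
`a+b ≤ r`, `a+c ≤ r`, `c+d ≤ r`, `b+d ≤ r`. -/
def Dset (r : ℕ) : Finset (ℕ × ℕ × ℕ × ℕ) :=
  (Finset.range (r+1) ×ˢ Finset.range (r+1) ×ˢ Finset.range (r+1) ×ˢ Finset.range (r+1)).filter
    (fun α => α.1 + α.2.1 ≤ r ∧ α.1 + α.2.2.1 ≤ r ∧ α.2.2.1 + α.2.2.2 ≤ r ∧ α.2.1 + α.2.2.2 ≤ r)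

/-- The coefficient `F_α` for `α = (a,b,c,d)`. -/
def Fa (n r : ℕ) (α : ℕ × ℕ × ℕ × ℕ) : ℝ :=
  match α with
  | (a, b, c, d) =>
    ((r.factorial : ℝ) / ((a.factorial : ℝ) * c.factorial * (r - a - c).factorial)) *
    ((r.factorial : ℝ) / ((b.factorial : ℝ) * d.factorial * (r - b - d).factorial)) *
    (((n - 2*r).factorial : ℝ) /
      (((r - a - b).factorial : ℝ) * (r - c - d).factorial * (n - 4*r + a + b + c + d).factorial)) /
    ((n.factorial : ℝ) / ((r.factorial : ℝ) * r.factorial * (n - 2*r).factorial))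

/-- `L(α) = C(a,2) + C(b,2) + C(c,2) + C(d,2)`. -/
def La (α : ℕ × ℕ × ℕ × ℕ) : ℕ :=
  α.1.choose 2 + α.2.1.choose 2 + α.2.2.1.choose 2 + α.2.2.2.choose 2

/-- `T_α = F_α · q^{L(α)}` with `q = 1/p`. -/
def Ta (n r : ℕ) (p : ℝ) (α : ℕ × ℕ × ℕ × ℕ) : ℝ := Fa n r α * (p⁻¹) ^ (La α)

lemma aux1 (m k : ℕ) : (m + k).factorial ≤ m.factorial * (m + k)^k := by
  induction k with
  | zero => simp
  | succ k ih =>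
    have h1 : (m + (k+1)).factorial = (m + k + 1) * (m + k).factorial := rfl
    rw [h1]
    calc (m + k + 1) * (m + k).factorial ≤ (m + k + 1) * (m.factorial * (m + k)^k) :=
        Nat.mul_le_mul_left _ ih
    _ = m.factorial * ((m + k)^k * (m + k + 1)) := by ring
    _ ≤ m.factorial * ((m + k + 1)^k * (m + k + 1)) := by
        exact Nat.mul_le_mul_left _ (Nat.mul_le_mul_right _ (Nat.pow_le_pow_left (Nat.le_succ _) _))
    _ = m.factorial * (m + (k+1))^(k+1) := by rw [← pow_succ]; ring_nf

lemma aux2 (m k : ℕ) : m.factorial * m^k ≤ (m + k).factorial := by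
  induction k with
  | zero => simp
  | succ k ih =>
    have h1 : (m + (k+1)).factorial = (m + k + 1) * (m + k).factorial := rfl
    rw [h1]
    calc m.factorial * m^(k+1) = (m.factorial * m^k) * m := by rw [pow_succ]; ring
    _ ≤ (m + k).factorial * (m + k + 1) := Nat.mul_le_mul ih (by omega)
    _ = (m + k + 1) * (m + k).factorial := by ring

lemma aux3 (m : ℕ) (hm : 1 ≤ m) :
    (m.factorial : ℝ) ≤ Real.exp 1 * m * ((m : ℝ)/Real.exp 1)^m := by
  induction m, hm using Nat.le_induction with
  | base =>
    have : Real.exp 1 * 1 * ((1:ℝ)/Real.exp 1)^1 = 1 := by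
      field_simp
    simp [Nat.factorial, this]
  | succ m hm ih =>
    have he : (0:ℝ) < Real.exp 1 := Real.exp_pos 1
    have hm0 : (0:ℝ) < m := by exact_mod_cast Nat.lt_of_lt_of_le Nat.zero_lt_one hm
    have hkey : Real.exp 1 * (m:ℝ)^(m+1) ≤ ((m:ℝ)+1)^(m+1) := by
      have h2 : (1:ℝ) - 1/((m:ℝ)+1) ≤ Real.exp (-(1/((m:ℝ)+1))) := by
        have := Real.add_one_le_exp (-(1/((m:ℝ)+1))); linarith
      have h3 : (0:ℝ) < 1 - 1/((m:ℝ)+1) := by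
        rw [sub_pos, div_lt_one (by positivity)]; linarith
      have hmul : Real.exp (1/((m:ℝ)+1)) * (1 - 1/((m:ℝ)+1)) ≤ 1 := by
        have h7 : Real.exp (1/((m:ℝ)+1)) * Real.exp (-(1/((m:ℝ)+1))) = 1 := by
          rw [← Real.exp_add]; simp
        nlinarith [Real.exp_pos (1/((m:ℝ)+1)), h2]
      have h1 : Real.exp (1/((m:ℝ)+1)) ≤ ((m:ℝ)+1)/m := by
        rw [show ((m:ℝ)+1)/(m:ℝ) = 1/(1 - 1/((m:ℝ)+1)) by
          rw [show (1:ℝ) - 1/((m:ℝ)+1) = m/((m:ℝ)+1) by field_simp; ring]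
          rw [one_div, inv_div]]
        rw [le_div_iff₀ h3]
        exact hmul
      have h4 : Real.exp 1 = Real.exp (1/((m:ℝ)+1))^(m+1) := by
        rw [← Real.exp_nat_mul]; congr 1; push_cast; field_simp
      rw [h4]
      calc Real.exp (1/((m:ℝ)+1))^(m+1) * (m:ℝ)^(m+1)
          ≤ (((m:ℝ)+1)/m)^(m+1) * (m:ℝ)^(m+1) := by
            gcongr
      _ = ((m:ℝ)+1)^(m+1) := by rw [← mul_pow]; congr 1; field_simp
    have hstep : (m:ℝ)*((m:ℝ)/Real.exp 1)^m ≤ (((m:ℝ)+1)/Real.exp 1)^(m+1) := by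
      rw [div_pow, div_pow,
        show (m:ℝ) * ((m:ℝ)^m / Real.exp 1^m) = ((m:ℝ)*(m:ℝ)^m)/Real.exp 1^m by ring,
        div_le_div_iff₀ (by positivity) (by positivity)]
      calc (m:ℝ)*(m:ℝ)^m * Real.exp 1^(m+1) = (Real.exp 1 * (m:ℝ)^(m+1)) * Real.exp 1^m := by
            rw [pow_succ, pow_succ]; ring
      _ ≤ ((m:ℝ)+1)^(m+1) * Real.exp 1^m := by gcongr
    have hgoal : ((m+1).factorial : ℝ) = ((m:ℝ)+1) * m.factorial := by
      rw [Nat.factorial_succ]; push_cast; ring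
    calc ((m+1).factorial : ℝ) = ((m:ℝ)+1) * m.factorial := hgoal
    _ ≤ ((m:ℝ)+1) * (Real.exp 1 * m * ((m:ℝ)/Real.exp 1)^m) := by
        gcongr
    _ = Real.exp 1 * ((m:ℝ)+1) * ((m:ℝ)*((m:ℝ)/Real.exp 1)^m) := by ring
    _ ≤ Real.exp 1 * ((m:ℝ)+1) * (((m:ℝ)+1)/Real.exp 1)^(m+1) := by gcongr
    _ = Real.exp 1 * ((m+1:ℕ):ℝ) * (((m+1:ℕ):ℝ)/Real.exp 1)^(m+1) := by push_cast; ring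

lemma Ta_nonneg (n r : ℕ) (p : ℝ) (hp : 0 < p) (α : ℕ × ℕ × ℕ × ℕ) : 0 ≤ Ta n r p α := by
  obtain ⟨a, b, c, d⟩ := α
  unfold Ta Fa
  dsimp only
  positivity

lemma Fa_eval (n r : ℕ) (hr : 3 ≤ r) (h4 : 4*r ≤ n) :
    Fa n r (r - 1, 0, 0, 0) =
      (r:ℝ) * r.factorial * ((n - 2*r).factorial:ℝ)^2 /
        (((n - 3*r - 1).factorial:ℝ) * (n.factorial:ℝ)) := by
  unfold Fa
  dsimp only
  rw [show r - (r-1) - 0 = 1 by omega, show r - 0 - 0 = r by omega,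
    show n - 4*r + (r-1) + 0 + 0 + 0 = n - 3*r - 1 by omega]
  simp only [Nat.factorial_one, Nat.factorial_zero]
  have hfac : (r.factorial:ℝ) = r * (r-1).factorial := by
    have h : r - 1 + 1 = r := by omega
    have h2 : r.factorial = (r - 1 + 1) * (r-1).factorial := by rw [← Nat.factorial_succ, h]
    rw [h2]
    push_cast [h]
    ring
  have f1 : ((r-1).factorial:ℝ) ≠ 0 := Nat.cast_ne_zero.2 (Nat.factorial_ne_zero _)
  have f2 : ((n-2*r).factorial:ℝ) ≠ 0 := Nat.cast_ne_zero.2 (Nat.factorial_ne_zero _)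
  have f3 : ((n-3*r-1).factorial:ℝ) ≠ 0 := Nat.cast_ne_zero.2 (Nat.factorial_ne_zero _)
  have f4 : ((n).factorial:ℝ) ≠ 0 := Nat.cast_ne_zero.2 (Nat.factorial_ne_zero _)
  rw [hfac]
  field_simp
  ring

lemma pow_regroup (e Q R N G : ℝ) (r : ℕ) (he : e ≠ 0) (hN : N ≠ 0) :
    (e * Q) * (R^2 * (e*N/N^r) * ((R/e)^r * G^r)) = (e^2*Q*R^2*N) * ((R/(e*N) * G)^r) := by
  rw [mul_pow, div_pow, div_pow, mul_pow]
  field_simp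

set_option maxHeartbeats 1000000 in
/-- For `r = r(n) = ⌊z(n,p) − ε⌋` there is a constant `C > 0` such that for all sufficiently
large `n`, `T_{(r−1,0,0,0)} ≤ C·(log_q n)²/n`; in particular `r⁴·T_{(r−1,0,0,0)} → 0`. -/
theorem stmt13 (p ε : ℝ) (hp0 : 0 < p) (hp1 : p < 1) (hε : 0 < ε) (hε' : ε < 1/2) :
    (∃ C : ℝ, 0 < C ∧ ∀ᶠ n : ℕ in atTop,
      Ta n ⌊zf p n - ε⌋.toNat p (⌊zf p n - ε⌋.toNat - 1, 0, 0, 0) ≤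
        C * (Real.logb p⁻¹ n) ^ 2 / n) ∧
    Tendsto (fun n : ℕ => (⌊zf p n - ε⌋.toNat : ℝ) ^ 4 *
        Ta n ⌊zf p n - ε⌋.toNat p (⌊zf p n - ε⌋.toNat - 1, 0, 0, 0))
      atTop (nhds 0) := by
  have hq : 1 < p⁻¹ := by
    rw [one_lt_inv_iff₀]; exact ⟨hp0, hp1⟩
  set q := p⁻¹ with hqdef
  have hq0 : (0:ℝ) < q := lt_trans one_pos hq
  have hc : 0 < Real.log q := Real.log_pos hq
  set c := Real.log q with hcdef
  set lam := Real.logb q (Real.exp 1 / 2) with hlamdef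
  set KC := 4 * Real.exp 1 ^ 2 * q with hKCdef
  have hKC1 : (1:ℝ) ≤ KC := by
    have h1 : (1:ℝ) ≤ Real.exp 1 := by linarith [Real.add_one_le_exp (1:ℝ)]
    rw [hKCdef]; nlinarith [hq]
  have hKC0 : (0:ℝ) < KC := lt_of_lt_of_le one_pos hKC1
  have hLtop : Tendsto (fun n : ℕ => Real.logb q (n:ℝ)) atTop atTop :=
    (Real.tendsto_logb_atTop hq).comp tendsto_natCast_atTop_atTop
  have hlog_small : ∀ᶠ x : ℝ in atTop, Real.log x ≤ c/2 * x := by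
    have h := Asymptotics.IsLittleO.def Real.isLittleO_log_id_atTop
      (by positivity : (0:ℝ) < c/2)
    filter_upwards [h, eventually_ge_atTop (1:ℝ)] with x h1 h2
    calc Real.log x ≤ |Real.log x| := le_abs_self _
    _ ≤ c/2 * |x| := by simpa [Real.norm_eq_abs] using h1
    _ = c/2 * x := by rw [abs_of_nonneg (by linarith)]
  have hexp_poly : ∀ (M a : ℝ), 0 < M → 0 < a →
      ∀ᶠ x : ℝ in atTop, M * x^10 ≤ Real.exp (a*x) := by
    intro M a hM ha
    have h1 : Tendsto (fun x : ℝ => a * x) atTop atTop :=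
      Tendsto.const_mul_atTop ha tendsto_id
    have h2 := (Real.tendsto_exp_div_pow_atTop 10).eventually_ge_atTop (M / a^10)
    filter_upwards [h1.eventually h2, eventually_ge_atTop (1:ℝ)] with x hx hx1
    have hx0 : (0:ℝ) < x := by linarith
    have h3 : M * (a*x)^10 ≤ Real.exp (a*x) * a^10 := by
      rw [← div_le_div_iff₀ (by positivity) (by positivity)]
      exact hx
    rw [mul_pow] at h3
    have h4 : (M * x^10) * a^10 ≤ Real.exp (a*x) * a^10 := by nlinarith
    exact le_of_mul_le_mul_right h4 (by positivity)
  have hlogb_big : ∀ C : ℝ, ∀ᶠ x : ℝ in atTop, C ≤ Real.logb q x := fun C =>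
    (Real.tendsto_logb_atTop hq).eventually_ge_atTop C
  have QX : ∀ᶠ x : ℝ in atTop,
      1 ≤ x ∧
      3 ≤ (2*x - 2*Real.logb q x + 2*lam + 1) - ε ∧
      (2*x - 2*Real.logb q x + 2*lam + 1) - ε ≤ 2*x ∧
      2*x - 3*Real.logb q x ≤ (2*x - 2*Real.logb q x + 2*lam + 1) - ε - 1 ∧
      16*x^2 + 12*x + 3 ≤ Real.exp (c*x) ∧
      16*KC*x^10 ≤ Real.exp ((ε*c)*x) := by
    filter_upwards [eventually_ge_atTop (max 1 (3 - (2*lam + 1 - ε))),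
      hlog_small, hlogb_big ((2*lam + 1)/2), hlogb_big (ε - 2*lam),
      hexp_poly 31 c (by norm_num) hc,
      hexp_poly (16*KC) (ε*c) (by positivity) (mul_pos hε hc)] with x hx1 h2 h3 h4 h5 h6
    have hx1' : (1:ℝ) ≤ x := le_trans (le_max_left _ _) hx1
    have hx0 : (0:ℝ) < x := by linarith
    have hlbx : Real.logb q x ≤ x/2 := by
      rw [Real.logb, ← hcdef, div_le_div_iff₀ hc (by norm_num : (0:ℝ) < 2)]
      nlinarith
    refine ⟨hx1', ?_, ?_, ?_, ?_, h6⟩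
    · have hxc : 3 - (2*lam+1-ε) ≤ x := le_trans (le_max_right _ _) hx1
      linarith
    · linarith
    · linarith
    · have e1 : x^2 ≤ x^10 := pow_le_pow_right₀ hx1' (by norm_num)
      have e2 : x ≤ x^10 := by
        calc x = x^1 := (pow_one x).symm
        _ ≤ x^10 := pow_le_pow_right₀ hx1' (by norm_num)
      have e3 : (1:ℝ) ≤ x^10 := le_trans hx1' e2
      linarith
  have key : ∀ᶠ n : ℕ in atTop,
      Ta n ⌊zf p n - ε⌋.toNat p (⌊zf p n - ε⌋.toNat - 1, 0, 0, 0) ≤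
        (Real.logb q (n:ℝ))^2 / (n:ℝ) ∧
      ((⌊zf p n - ε⌋.toNat : ℕ):ℝ)^4 *
        Ta n ⌊zf p n - ε⌋.toNat p (⌊zf p n - ε⌋.toNat - 1, 0, 0, 0) ≤ 1 / (n:ℝ) := by
    filter_upwards [hLtop.eventually QX, eventually_ge_atTop 2] with n hQ hn2
    obtain ⟨hx1, hw3', hw2L', hwlow', hNL, hG⟩ := hQ
    have hN2 : (2:ℝ) ≤ (n:ℝ) := by exact_mod_cast hn2
    have hN0 : (0:ℝ) < (n:ℝ) := by linarith
    set L := Real.logb q ((n:ℕ):ℝ) with hLdef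
    have hL1 : (1:ℝ) ≤ L := hx1
    have hL0 : (0:ℝ) < L := by linarith
    have hw : zf p n = 2*L - 2*Real.logb q L + 2*lam + 1 := by
      rw [hLdef, hlamdef, hqdef]; rfl
    set w := zf p n - ε with hwdef
    set r := ⌊w⌋.toNat with hrdef
    have hw3 : (3:ℝ) ≤ w := by rw [hwdef, hw]; linarith
    have hw2L : w ≤ 2*L := by rw [hwdef, hw]; linarith
    have hwlow : 2*L - 3*Real.logb q L ≤ w - 1 := by rw [hwdef, hw]; linarith
    have hfl0 : (0:ℤ) ≤ ⌊w⌋ := Int.le_floor.mpr (by push_cast; linarith)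
    have hfl3 : (3:ℤ) ≤ ⌊w⌋ := Int.le_floor.mpr (by push_cast; linarith)
    have hr3 : 3 ≤ r := by
      have h := Int.toNat_le_toNat hfl3
      simpa [hrdef] using h
    have hcastZ : ((r:ℕ):ℤ) = ⌊w⌋ := by rw [hrdef]; exact Int.toNat_of_nonneg hfl0
    have hRfl : ((r:ℕ):ℝ) = ((⌊w⌋:ℤ):ℝ) := by exact_mod_cast congrArg (Int.cast : ℤ → ℝ) hcastZ
    have hRw : ((r:ℕ):ℝ) ≤ w := by rw [hRfl]; exact Int.floor_le w
    have hRlow1 : w - 1 < ((r:ℕ):ℝ) := by rw [hRfl]; exact Int.sub_one_lt_floor w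
    have hR2L : ((r:ℕ):ℝ) ≤ 2*L := le_trans hRw hw2L
    have hRlow : 2*L - 3*Real.logb q L ≤ ((r:ℕ):ℝ) := le_of_lt (lt_of_le_of_lt hwlow hRlow1)
    have hR3 : (3:ℝ) ≤ ((r:ℕ):ℝ) := by exact_mod_cast hr3
    have hR0 : (0:ℝ) < ((r:ℕ):ℝ) := by linarith
    have hlogN : c * L = Real.log ((n:ℕ):ℝ) := by
      rw [hLdef, ← Real.log_div_log, ← hcdef]
      field_simp
    have hclogL : c * Real.logb q L = Real.log L := by
      rw [← Real.log_div_log, ← hcdef]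
      field_simp
    have hclam : c * lam = Real.log (Real.exp 1 / 2) := by
      rw [hlamdef, ← Real.log_div_log, ← hcdef]
      field_simp
    have hNbig : 16*L^2 + 12*L + 3 ≤ (n:ℝ) := by
      have h := hNL
      rw [hlogN, Real.exp_log hN0] at h
      exact h
    have hprod1 : (0:ℝ) ≤ 8*L*(2*L-1) := mul_nonneg (by linarith) (by linarith)
    have hprod2 : (0:ℝ) ≤ (2*L - ((r:ℕ):ℝ))*(2*L + ((r:ℕ):ℝ)) :=
      mul_nonneg (by linarith) (by linarith)
    have h4rn : 4*r ≤ n := by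
      have h : ((4*r:ℕ):ℝ) ≤ (n:ℝ) := by push_cast; linarith
      exact_mod_cast h
    have h2rn : 2*r ≤ n := by omega
    have h4r2 : 4*r^2 + 2*r ≤ n := by
      have h : ((4*r^2 + 2*r:ℕ):ℝ) ≤ (n:ℝ) := by push_cast; nlinarith [hprod2, hNbig, hR2L, hL0]
      exact_mod_cast h
    have hMcast : ((n - 2*r : ℕ):ℝ) = (n:ℝ) - 2*((r:ℕ):ℝ) := by
      push_cast [h2rn]; ring
    have hM0 : (0:ℝ) < ((n - 2*r : ℕ):ℝ) := by
      rw [hMcast]; nlinarith [hNbig, hR2L, hL0, sq_nonneg L]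
    have hFa := Fa_eval n r hr3 h4rn
    have hP1 : ((n - 2*r).factorial:ℝ) ≤ ((n - 3*r - 1).factorial:ℝ) * (n:ℝ)^(r+1) := by
      have h := aux1 (n - 3*r - 1) (r + 1)
      rw [show n - 3*r - 1 + (r+1) = n - 2*r by omega] at h
      have h2 : (n-2*r).factorial ≤ (n-3*r-1).factorial * n^(r+1) :=
        h.trans (Nat.mul_le_mul_left _ (Nat.pow_le_pow_left (by omega) _))
      calc ((n - 2*r).factorial:ℝ) ≤ (((n-3*r-1).factorial * n^(r+1) : ℕ):ℝ) := by
            exact_mod_cast h2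
      _ = ((n - 3*r - 1).factorial:ℝ) * (n:ℝ)^(r+1) := by push_cast; ring
    have hP2 : ((n - 2*r).factorial:ℝ) * ((n-2*r:ℕ):ℝ)^(2*r) ≤ (n.factorial:ℝ) := by
      have h := aux2 (n - 2*r) (2*r)
      rw [show n - 2*r + 2*r = n by omega] at h
      exact_mod_cast h
    have hfacpos : (0:ℝ) < ((n-3*r-1).factorial:ℝ) * (n.factorial:ℝ) :=
      mul_pos (by exact_mod_cast Nat.factorial_pos _) (by exact_mod_cast Nat.factorial_pos _)
    have hFb : Fa n r (r - 1, 0, 0, 0) ≤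
        ((r:ℕ):ℝ) * (r.factorial:ℝ) * (n:ℝ)^(r+1) / ((n-2*r:ℕ):ℝ)^(2*r) := by
      rw [hFa, div_le_div_iff₀ hfacpos (pow_pos hM0 _)]
      calc ((r:ℕ):ℝ) * (r.factorial:ℝ) * (((n-2*r).factorial:ℝ))^2 * ((n-2*r:ℕ):ℝ)^(2*r)
          = (((r:ℕ):ℝ) * (r.factorial:ℝ)) *
            (((n-2*r).factorial:ℝ) * (((n-2*r).factorial:ℝ) * ((n-2*r:ℕ):ℝ)^(2*r))) := by ring
      _ ≤ (((r:ℕ):ℝ) * (r.factorial:ℝ)) *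
            ((((n - 3*r - 1).factorial:ℝ) * (n:ℝ)^(r+1)) * (n.factorial:ℝ)) := by
          gcongr
      _ = ((r:ℕ):ℝ) * (r.factorial:ℝ) * (n:ℝ)^(r+1) *
            (((n-3*r-1).factorial:ℝ) * (n.factorial:ℝ)) := by ring
    have hfact : (r.factorial:ℝ) ≤ Real.exp 1 * ((r:ℕ):ℝ) * (((r:ℕ):ℝ)/Real.exp 1)^r :=
      aux3 r (by omega)
    have hMr4 : 4*((r:ℕ):ℝ)^2 ≤ ((n-2*r:ℕ):ℝ) := by
      rw [hMcast]
      have h : ((4*r^2 + 2*r:ℕ):ℝ) ≤ (n:ℝ) := by exact_mod_cast h4r2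
      push_cast at h
      linarith
    have hP3 : (n:ℝ)^(2*r) ≤ Real.exp 1 * ((n-2*r:ℕ):ℝ)^(2*r) := by
      have h7 : ((n-2*r:ℕ):ℝ) * (2*((r:ℕ):ℝ)/((n-2*r:ℕ):ℝ) + 1) = (n:ℝ) := by
        rw [mul_add, mul_one, mul_div_cancel₀ _ hM0.ne', hMcast]
        ring
      have hstep : (n:ℝ) ≤ ((n-2*r:ℕ):ℝ) * Real.exp (2*((r:ℕ):ℝ)/((n-2*r:ℕ):ℝ)) := by
        have h5 := Real.add_one_le_exp (2*((r:ℕ):ℝ)/((n-2*r:ℕ):ℝ))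
        have h6 := mul_le_mul_of_nonneg_left h5 hM0.le
        calc (n:ℝ) = ((n-2*r:ℕ):ℝ) * (2*((r:ℕ):ℝ)/((n-2*r:ℕ):ℝ) + 1) := h7.symm
        _ ≤ ((n-2*r:ℕ):ℝ) * Real.exp (2*((r:ℕ):ℝ)/((n-2*r:ℕ):ℝ)) := h6
      calc (n:ℝ)^(2*r)
          ≤ (((n-2*r:ℕ):ℝ) * Real.exp (2*((r:ℕ):ℝ)/((n-2*r:ℕ):ℝ)))^(2*r) :=
            pow_le_pow_left₀ hN0.le hstep _
      _ = ((n-2*r:ℕ):ℝ)^(2*r) * Real.exp (2*((r:ℕ):ℝ)/((n-2*r:ℕ):ℝ))^(2*r) := mul_pow _ _ _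
      _ = ((n-2*r:ℕ):ℝ)^(2*r) * Real.exp (((2*r:ℕ):ℝ) * (2*((r:ℕ):ℝ)/((n-2*r:ℕ):ℝ))) := by
          rw [Real.exp_nat_mul]
      _ ≤ ((n-2*r:ℕ):ℝ)^(2*r) * Real.exp 1 := by
          apply mul_le_mul_of_nonneg_left _ (by positivity)
          apply Real.exp_le_exp.2
          rw [show (((2*r:ℕ):ℝ)) * (2*((r:ℕ):ℝ)/((n-2*r:ℕ):ℝ)) =
            (4*((r:ℕ):ℝ)^2)/((n-2*r:ℕ):ℝ) by push_cast; ring]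
          rw [div_le_one hM0]
          exact hMr4
      _ = Real.exp 1 * ((n-2*r:ℕ):ℝ)^(2*r) := mul_comm _ _
    have hNdiv : (n:ℝ)^(r+1) / ((n-2*r:ℕ):ℝ)^(2*r) ≤ Real.exp 1 * (n:ℝ) / (n:ℝ)^r := by
      rw [div_le_div_iff₀ (pow_pos hM0 _) (pow_pos hN0 _)]
      calc (n:ℝ)^(r+1) * (n:ℝ)^r = (n:ℝ)^(2*r) * (n:ℝ) := by
            rw [← pow_add, ← pow_succ]
            congr 1
            omega
      _ ≤ (Real.exp 1 * ((n-2*r:ℕ):ℝ)^(2*r)) * (n:ℝ) :=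
            mul_le_mul_of_nonneg_right hP3 hN0.le
      _ = Real.exp 1 * (n:ℝ) * ((n-2*r:ℕ):ℝ)^(2*r) := by ring
    have hexpc : Real.exp c = q := by rw [hcdef]; exact Real.exp_log hq0
    have hLa : La (r - 1, 0, 0, 0) = (r-1).choose 2 := by simp [La]
    have h2K : 2 * (((r-1).choose 2 : ℕ):ℝ) = (((r:ℕ):ℝ)-1) * (((r:ℕ):ℝ)-2) := by
      rw [Nat.cast_choose_two]
      rw [Nat.cast_sub (by omega : 1 ≤ r)]
      push_cast
      ring
    have hqK : q ^ ((r-1).choose 2) =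
        q * (Real.exp (c*(((r:ℕ):ℝ)-3)/2))^r := by
      have e1 : q ^ ((r-1).choose 2) = Real.exp ((((r-1).choose 2:ℕ):ℝ) * c) := by
        rw [Real.exp_nat_mul, hexpc]
      have e2 : q * (Real.exp (c*(((r:ℕ):ℝ)-3)/2))^r =
          Real.exp (c + ((r:ℕ):ℝ) * (c*(((r:ℕ):ℝ)-3)/2)) := by
        rw [Real.exp_add, hexpc, ← Real.exp_nat_mul]
      rw [e1, e2]
      congr 1
      linear_combination (c/2) * h2K
    have hgw : Real.exp (c*(((r:ℕ):ℝ)-3)/2) ≤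
        (n:ℝ)*(Real.exp 1/2)/L * Real.exp (-(c*(2+ε)/2)) := by
      have e3 : (n:ℝ)*(Real.exp 1/2)/L * Real.exp (-(c*(2+ε)/2)) =
          Real.exp (Real.log ((n:ℕ):ℝ) + Real.log (Real.exp 1/2) - Real.log L +
            -(c*(2+ε)/2)) := by
        rw [Real.exp_add, Real.exp_sub, Real.exp_add, Real.exp_log hN0,
          Real.exp_log (by positivity : (0:ℝ) < Real.exp 1/2), Real.exp_log hL0]
      rw [e3]
      apply Real.exp_le_exp.2
      have h1 : c*(((r:ℕ):ℝ)-3)/2 ≤ c*(w-3)/2 :=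
        (div_le_div_iff_of_pos_right (show (0:ℝ) < 2 by norm_num)).mpr
          (mul_le_mul_of_nonneg_left (show ((r:ℕ):ℝ) - 3 ≤ w - 3 by linarith) hc.le)
      refine h1.trans (le_of_eq ?_)
      rw [hwdef, hw]
      linear_combination hlogN - hclogL + hclam
    have hbg : ((r:ℕ):ℝ)/(Real.exp 1 * (n:ℝ)) * Real.exp (c*(((r:ℕ):ℝ)-3)/2) ≤
        Real.exp (-(c*(2+ε)/2)) := by
      have hb0 : (0:ℝ) ≤ ((r:ℕ):ℝ)/(Real.exp 1 * (n:ℝ)) := by positivity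
      calc ((r:ℕ):ℝ)/(Real.exp 1 * (n:ℝ)) * Real.exp (c*(((r:ℕ):ℝ)-3)/2)
          ≤ ((r:ℕ):ℝ)/(Real.exp 1 * (n:ℝ)) *
            ((n:ℝ)*(Real.exp 1/2)/L * Real.exp (-(c*(2+ε)/2))) :=
            mul_le_mul_of_nonneg_left hgw hb0
      _ = (((r:ℕ):ℝ)/(2*L)) * Real.exp (-(c*(2+ε)/2)) := by
          field_simp
      _ ≤ 1 * Real.exp (-(c*(2+ε)/2)) := by
          apply mul_le_mul_of_nonneg_right _ (Real.exp_pos _).le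
          rw [div_le_one (by linarith)]
          linarith
      _ = Real.exp (-(c*(2+ε)/2)) := one_mul _
    have hbr : (Real.exp (-(c*(2+ε)/2)))^r ≤
        Real.exp (-(2+ε) * Real.log ((n:ℕ):ℝ)) * L^4 := by
      have e1 : (Real.exp (-(c*(2+ε)/2)))^r = Real.exp (((r:ℕ):ℝ) * (-(c*(2+ε)/2))) := by
        rw [Real.exp_nat_mul]
      rw [e1]
      have hk : (0:ℝ) ≤ c*(2+ε)/2 := by
        have := mul_pos hc (show (0:ℝ) < 2+ε by linarith)
        linarith
      calc Real.exp (((r:ℕ):ℝ) * (-(c*(2+ε)/2)))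
          ≤ Real.exp (-(2+ε)*Real.log ((n:ℕ):ℝ) + (3*(2+ε)/2)*Real.log L) := by
            apply Real.exp_le_exp.2
            have e2 : ((r:ℕ):ℝ) * (-(c*(2+ε)/2)) ≤
                (2*L - 3*Real.logb q L) * (-(c*(2+ε)/2)) := by
              rw [mul_neg, mul_neg, neg_le_neg_iff]
              exact mul_le_mul_of_nonneg_right hRlow hk
            refine e2.trans (le_of_eq ?_)
            rw [show (2*L - 3*Real.logb q L) * (-(c*(2+ε)/2)) =
              -(2+ε)*(c*L) + (3*(2+ε)/2)*(c*Real.logb q L) by ring, hlogN, hclogL]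
      _ ≤ Real.exp (-(2+ε)*Real.log ((n:ℕ):ℝ) + 4*Real.log L) := by
            apply Real.exp_le_exp.2
            have hlogL : 0 ≤ Real.log L := Real.log_nonneg hL1
            have h8 : (3*(2+ε)/2) * Real.log L ≤ 4 * Real.log L :=
              mul_le_mul_of_nonneg_right (by linarith) hlogL
            linarith
      _ = Real.exp (-(2+ε)*Real.log ((n:ℕ):ℝ)) * L^4 := by
            rw [Real.exp_add]
            congr 1
            rw [show (4:ℝ)*Real.log L = Real.log (L^4) by rw [Real.log_pow]; push_cast; ring]
            exact Real.exp_log (pow_pos hL0 4)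
    have hT : Ta n r p (r - 1, 0, 0, 0) ≤
        KC * L^6 * Real.exp (-(1+ε) * Real.log ((n:ℕ):ℝ)) := by
      have hTdef : Ta n r p (r - 1, 0, 0, 0) =
          Fa n r (r - 1, 0, 0, 0) * q ^ ((r-1).choose 2) := by
        unfold Ta
        rw [hLa, ← hqdef]
      have hQg0 : (0:ℝ) ≤ q * (Real.exp (c*(((r:ℕ):ℝ)-3)/2))^r :=
        mul_nonneg hq0.le (pow_nonneg (Real.exp_pos _).le _)
      rw [hTdef, hqK]
      calc Fa n r (r - 1, 0, 0, 0) * (q * (Real.exp (c*(((r:ℕ):ℝ)-3)/2))^r)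
          ≤ (((r:ℕ):ℝ) * (r.factorial:ℝ) * (n:ℝ)^(r+1) / ((n-2*r:ℕ):ℝ)^(2*r)) *
            (q * (Real.exp (c*(((r:ℕ):ℝ)-3)/2))^r) :=
            mul_le_mul_of_nonneg_right hFb hQg0
      _ ≤ (((r:ℕ):ℝ) * (Real.exp 1 * ((r:ℕ):ℝ) * (((r:ℕ):ℝ)/Real.exp 1)^r) * (n:ℝ)^(r+1) /
            ((n-2*r:ℕ):ℝ)^(2*r)) * (q * (Real.exp (c*(((r:ℕ):ℝ)-3)/2))^r) := by
          apply mul_le_mul_of_nonneg_right _ hQg0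
          apply (div_le_div_iff_of_pos_right (pow_pos hM0 _)).mpr
          exact mul_le_mul_of_nonneg_right
            (mul_le_mul_of_nonneg_left hfact (by positivity)) (by positivity)
      _ = (Real.exp 1 * q) * (((r:ℕ):ℝ)^2 * ((n:ℝ)^(r+1)/((n-2*r:ℕ):ℝ)^(2*r)) *
            ((((r:ℕ):ℝ)/Real.exp 1)^r * (Real.exp (c*(((r:ℕ):ℝ)-3)/2))^r)) := by ring
      _ ≤ (Real.exp 1 * q) * (((r:ℕ):ℝ)^2 * (Real.exp 1 * (n:ℝ)/(n:ℝ)^r) *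
            ((((r:ℕ):ℝ)/Real.exp 1)^r * (Real.exp (c*(((r:ℕ):ℝ)-3)/2))^r)) := by
          apply mul_le_mul_of_nonneg_left _ (by positivity)
          apply mul_le_mul_of_nonneg_right _ (by positivity)
          exact mul_le_mul_of_nonneg_left hNdiv (by positivity)
      _ = (Real.exp 1^2 * q * ((r:ℕ):ℝ)^2 * (n:ℝ)) *
            ((((r:ℕ):ℝ)/(Real.exp 1 * (n:ℝ)) * Real.exp (c*(((r:ℕ):ℝ)-3)/2))^r) := by
          exact pow_regroup (Real.exp 1) q ((r:ℕ):ℝ) ((n:ℝ))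
            (Real.exp (c*(((r:ℕ):ℝ)-3)/2)) r (Real.exp_ne_zero 1) (ne_of_gt hN0)
      _ ≤ (Real.exp 1^2 * q * ((r:ℕ):ℝ)^2 * (n:ℝ)) * ((Real.exp (-(c*(2+ε)/2)))^r) := by
          apply mul_le_mul_of_nonneg_left _ (by positivity)
          exact pow_le_pow_left₀ (by positivity) hbg r
      _ ≤ (Real.exp 1^2 * q * ((r:ℕ):ℝ)^2 * (n:ℝ)) *
            (Real.exp (-(2+ε) * Real.log ((n:ℕ):ℝ)) * L^4) := by
          apply mul_le_mul_of_nonneg_left hbr (by positivity)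
      _ ≤ (Real.exp 1^2 * q * (2*L)^2 * (n:ℝ)) *
            (Real.exp (-(2+ε) * Real.log ((n:ℕ):ℝ)) * L^4) := by
          apply mul_le_mul_of_nonneg_right _ (by positivity)
          apply mul_le_mul_of_nonneg_right _ hN0.le
          apply mul_le_mul_of_nonneg_left _ (by positivity)
          exact pow_le_pow_left₀ (by positivity) hR2L 2
      _ = KC * L^6 * ((n:ℝ) * Real.exp (-(2+ε) * Real.log ((n:ℕ):ℝ))) := by
          rw [hKCdef]; ring
      _ = KC * L^6 * Real.exp (-(1+ε) * Real.log ((n:ℕ):ℝ)) := by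
          congr 1
          rw [show (n:ℝ) * Real.exp (-(2+ε)*Real.log ((n:ℕ):ℝ)) =
            Real.exp (Real.log ((n:ℕ):ℝ)) * Real.exp (-(2+ε)*Real.log ((n:ℕ):ℝ)) by
              rw [Real.exp_log hN0]]
          rw [← Real.exp_add]
          congr 1
          ring
    have hexpeps : (0:ℝ) < Real.exp (ε * Real.log ((n:ℕ):ℝ)) := Real.exp_pos _
    have hGN : 16*KC*L^10 ≤ Real.exp (ε * Real.log ((n:ℕ):ℝ)) := by
      rw [← hlogN, show ε*(c*L) = (ε*c)*L by ring]
      exact hG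
    constructor
    · have hsplit : KC*L^6*Real.exp (-(1+ε)*Real.log ((n:ℕ):ℝ)) =
          (KC*L^4*Real.exp (-(ε*Real.log ((n:ℕ):ℝ)))) *
          (L^2 * Real.exp (-Real.log ((n:ℕ):ℝ))) := by
        rw [mul_mul_mul_comm, ← Real.exp_add,
          show -(ε*Real.log ((n:ℕ):ℝ)) + -Real.log ((n:ℕ):ℝ) =
            -(1+ε)*Real.log ((n:ℕ):ℝ) by ring]
        ring
      have h1 : KC*L^4*Real.exp (-(ε*Real.log ((n:ℕ):ℝ))) ≤ 1 := by
        rw [Real.exp_neg, ← div_eq_mul_inv, div_le_one hexpeps]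
        have hp1 : L^4 ≤ L^10 := pow_le_pow_right₀ hL1 (by norm_num)
        have hp2 := mul_le_mul_of_nonneg_left hp1 hKC0.le
        have hp3 : (0:ℝ) ≤ KC*L^10 := mul_nonneg hKC0.le (pow_nonneg hL0.le 10)
        calc KC*L^4 ≤ 16*KC*L^10 := by linarith
        _ ≤ Real.exp (ε*Real.log ((n:ℕ):ℝ)) := hGN
      calc Ta n r p (r - 1, 0, 0, 0) ≤ KC*L^6*Real.exp (-(1+ε)*Real.log ((n:ℕ):ℝ)) := hT
      _ = (KC*L^4*Real.exp (-(ε*Real.log ((n:ℕ):ℝ)))) *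
          (L^2 * Real.exp (-Real.log ((n:ℕ):ℝ))) := hsplit
      _ ≤ 1 * (L^2 * Real.exp (-Real.log ((n:ℕ):ℝ))) :=
          mul_le_mul_of_nonneg_right h1 (by positivity)
      _ = L^2 / (n:ℝ) := by
          rw [one_mul, Real.exp_neg, Real.exp_log hN0]
          ring
    · calc ((r:ℕ):ℝ)^4 * Ta n r p (r - 1, 0, 0, 0)
          ≤ (2*L)^4 * (KC*L^6*Real.exp (-(1+ε)*Real.log ((n:ℕ):ℝ))) :=
          mul_le_mul (pow_le_pow_left₀ (by positivity) hR2L 4) hT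
            (Ta_nonneg n r p hp0 _) (by positivity)
      _ = (16*KC*L^10*Real.exp (-(ε*Real.log ((n:ℕ):ℝ)))) *
            Real.exp (-Real.log ((n:ℕ):ℝ)) := by
          rw [mul_assoc (16*KC*L^10), ← Real.exp_add,
            show -(ε*Real.log ((n:ℕ):ℝ)) + -Real.log ((n:ℕ):ℝ) =
              -(1+ε)*Real.log ((n:ℕ):ℝ) by ring]
          ring
      _ ≤ 1 * Real.exp (-Real.log ((n:ℕ):ℝ)) := by
          apply mul_le_mul_of_nonneg_right _ (Real.exp_pos _).le
          rw [Real.exp_neg, ← div_eq_mul_inv, div_le_one hexpeps]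
          exact hGN
      _ = 1 / (n:ℝ) := by
          rw [one_mul, Real.exp_neg, Real.exp_log hN0, one_div]
  refine ⟨⟨1, one_pos, key.mono fun n h => ?_⟩, ?_⟩
  · rw [one_mul]
    exact h.1
  · apply tendsto_of_tendsto_of_tendsto_of_le_of_le' tendsto_const_nhds
      tendsto_one_div_atTop_nhds_zero_nat
    · filter_upwards with n
      exact mul_nonneg (by positivity) (Ta_nonneg n _ p hp0 _)
    · exact key.mono fun n h => h.2

end
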